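/- Under the identification of the edge space ℓ₁(E(D_n)) of the binary diamond graph D_n with span({h₀} ∪ ⋃_{k=0}^{2n−1} H_k) ⊂ L¹[0,1] (edge i of D_n ↦ 4ⁿ·1_{((i−1)/4ⁿ, i/4ⁿ]}), the cycle space Z(D_n) corresponds exactly to span(⋃_{k=0}^{n−1} H_{2k}), the span of the even levels of the Haar system. -/

import Mathlib

open Finset

/-- Edge set of the `n`-th binary diamond graph: each edge spawns 4 edges. -/
def DE : ℕ → Type
  | 0 => Unit
  | n + 1 => DE n × Fin 4

/-- Vertex set of the `n`-th binary diamond graph: two new vertices per old edge. -/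
def DV : ℕ → Type
  | 0 => Fin 2
  | n + 1 => DV n ⊕ DE n × Fin 2

def deDecEq : ∀ n, DecidableEq (DE n)
  | 0 => inferInstanceAs (DecidableEq Unit)
  | n + 1 => letI := deDecEq n; inferInstanceAs (DecidableEq (DE n × Fin 4))

instance (n : ℕ) : DecidableEq (DE n) := deDecEq n

def deFintype : ∀ n, Fintype (DE n)
  | 0 => inferInstanceAs (Fintype Unit)
  | n + 1 => letI := deFintype n; inferInstanceAs (Fintype (DE n × Fin 4))

instance (n : ℕ) : Fintype (DE n) := deFintype n

def dvDecEq : ∀ n, DecidableEq (DV n)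
  | 0 => inferInstanceAs (DecidableEq (Fin 2))
  | n + 1 => letI := dvDecEq n; letI := deDecEq n
              inferInstanceAs (DecidableEq (DV n ⊕ DE n × Fin 2))

instance (n : ℕ) : DecidableEq (DV n) := dvDecEq n

def dvFintype : ∀ n, Fintype (DV n)
  | 0 => inferInstanceAs (Fintype (Fin 2))
  | n + 1 => letI := dvFintype n; letI := deFintype n
              inferInstanceAs (Fintype (DV n ⊕ DE n × Fin 2))

instance (n : ℕ) : Fintype (DV n) := dvFintype n

/-- Endpoints of the edges of the diamond graph `D_n`; each edge `e = (u,v)`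
(`u` the endpoint nearer the top) of `D_{n-1}` is replaced by the quadrilateral
`u, a, v, b` with edges `u a`, `a v`, `b v`, `u b`, each oriented downwards
(first coordinate nearer the top). `D_0` is a single edge `(0,1)` (`0` the top). -/
def ends : ∀ n, DE n → DV n × DV n
  | 0, _ => ((0 : Fin 2), (1 : Fin 2))
  | n + 1, (e, i) =>
      let u : DV (n + 1) := Sum.inl (ends n e).1
      let v : DV (n + 1) := Sum.inl (ends n e).2
      let a : DV (n + 1) := Sum.inr (e, (0 : Fin 2))
      let b : DV (n + 1) := Sum.inr (e, (1 : Fin 2))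
      if i.val = 0 then (u, a)
      else if i.val = 1 then (a, v)
      else if i.val = 2 then (b, v)
      else (u, b)

/-- The `n`-th binary diamond graph `D_n` (as an undirected simple graph). -/
def DG (n : ℕ) : SimpleGraph (DV n) where
  Adj x y := x ≠ y ∧ ∃ e : DE n, ends n e = (x, y) ∨ ends n e = (y, x)
  symm := by
    constructor
    intro x y h
    obtain ⟨hxy, e, he⟩ := h
    exact ⟨hxy.symm, e, he.symm⟩
  loopless := by
    constructor
    intro x h
    exact h.1 rfl

/-- The cycle space `Z(D_n)` of the diamond graph: the space of circulations, i.e. the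
kernel of the boundary operator. Over `ℝ` this is exactly the linear span of the signed
indicator functions of the cycles of `D_n` (w.r.t. the orientation given by `ends`). -/
def cycleSpace (n : ℕ) : Submodule ℝ (DE n → ℝ) where
  carrier := {f | ∀ v : DV n,
    ∑ e : DE n, f e * ((if (ends n e).2 = v then (1 : ℝ) else 0) -
      (if (ends n e).1 = v then (1 : ℝ) else 0)) = 0}
  add_mem' := by
    intro a b ha hb
    intro v
    simp only [Pi.add_apply, add_mul]
    rw [Finset.sum_add_distrib, ha v, hb v]
    ring
  zero_mem' := by
    intro v
    simp
  smul_mem' := by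
    intro c a ha
    intro v
    simp only [Pi.smul_apply, smul_eq_mul, mul_assoc]
    rw [← Finset.mul_sum, ha v, mul_zero]

/-- The `ℓ₁(E(D_n))` norm on the edge space. -/
def e1norm {n : ℕ} (f : DE n → ℝ) : ℝ := ∑ e, |f e|

open Classical in
/-- The Haar system on `(0,1]`: `h₀ = 1_{(0,1]}`, and for `i = 2^m + j` (`0 ≤ j < 2^m`),
`h_i = 1_{(j/2^m,(2j+1)/2^{m+1}]} - 1_{((2j+1)/2^{m+1},(j+1)/2^m]}`. -/
noncomputable def haar (i : ℕ) (t : ℝ) : ℝ :=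
  if i = 0 then (if 0 < t ∧ t ≤ 1 then 1 else 0)
  else
    let m := Nat.log2 i
    let j : ℝ := ((i - 2 ^ m : ℕ) : ℝ)
    if j / 2 ^ m < t ∧ t ≤ (2 * j + 1) / 2 ^ (m + 1) then 1
    else if (2 * j + 1) / 2 ^ (m + 1) < t ∧ t ≤ (j + 1) / 2 ^ m then -1
    else 0

/-- The `k`-th level of the Haar system: `H_k = {h_i : 2^k ≤ i < 2^{k+1}}`. -/
def haarLevel (k : ℕ) : Set (ℝ → ℝ) := haar '' Set.Ico (2 ^ k) (2 ^ (k + 1))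

/-- The `L²[0,1]` inner product. -/
noncomputable def L2inner (f g : ℝ → ℝ) : ℝ := ∫ t in (0:ℝ)..1, f t * g t

/-- The `L¹[0,1]` norm. -/
noncomputable def L1normI (f : ℝ → ℝ) : ℝ := ∫ t in (0:ℝ)..1, |f t|

/-- Left endpoint of the interval of length `4⁻ⁿ` associated to an edge of `D_n` under
the recursive identification of `ℓ₁(E(D_n))` with a subspace of `L¹[0,1]` (the four
edges replacing an edge occupy the four quarters of its interval, in order). -/
noncomputable def lep : ∀ n, DE n → ℝ
  | 0, _ => 0
  | n + 1, (e, i) => lep n e + (i.val : ℝ) / 4 ^ (n + 1)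

open Classical in
/-- The identification of the edge space `ℓ₁(E(D_n))` with
`span({h₀} ∪ ⋃_{k<2n} H_k) ⊂ L¹[0,1]`: the edge with interval `(a, a+4⁻ⁿ]` is sent to
`4ⁿ·1_{(a,a+4⁻ⁿ]}`. -/
noncomputable def emb (n : ℕ) (f : DE n → ℝ) : ℝ → ℝ := fun t =>
  ∑ e : DE n, f e * (4 ^ n * if lep n e < t ∧ t ≤ lep n e + 1 / 4 ^ n then 1 else 0)

attribute [reducible] DE DV

lemma mem_cycleSpace {n : ℕ} (f : DE n → ℝ) : f ∈ cycleSpace n ↔ ∀ v : DV n,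
    ∑ e : DE n, f e * ((if (ends n e).2 = v then (1 : ℝ) else 0) -
      (if (ends n e).1 = v then (1 : ℝ) else 0)) = 0 := Iff.rfl

lemma ends_succ0 (n : ℕ) (e : DE n) :
    ends (n+1) (e, 0) = (Sum.inl (ends n e).1, Sum.inr (e, 0)) := rfl
lemma ends_succ1 (n : ℕ) (e : DE n) :
    ends (n+1) (e, 1) = (Sum.inr (e, 0), Sum.inl (ends n e).2) := rfl
lemma ends_succ2 (n : ℕ) (e : DE n) :
    ends (n+1) (e, 2) = (Sum.inr (e, 1), Sum.inl (ends n e).2) := rfl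
lemma ends_succ3 (n : ℕ) (e : DE n) :
    ends (n+1) (e, 3) = (Sum.inl (ends n e).1, Sum.inr (e, 1)) := rfl

lemma lep_succ (n : ℕ) (e : DE n) (i : Fin 4) :
    lep (n+1) (e, i) = lep n e + (i.val : ℝ) / 4 ^ (n+1) := rfl
/-- index of an edge -/
def lidx : ∀ n, DE n → ℕ
  | 0, _ => 0
  | n + 1, (e, i) => 4 * lidx n e + i.val

lemma lidx_lt : ∀ n (e : DE n), lidx n e < 4 ^ n
  | 0, _ => by simp [lidx]
  | n + 1, (e, i) => by
      have h := lidx_lt n e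
      have : i.val < 4 := i.isLt
      simp only [lidx, pow_succ]
      omega

lemma lidx_surj : ∀ n (m : ℕ), m < 4 ^ n → ∃ e : DE n, lidx n e = m
  | 0, m, hm => ⟨(), by simpa [lidx] using (by omega : m = 0).symm⟩
  | n + 1, m, hm => by
      have h4 : m / 4 < 4 ^ n := by
        rw [pow_succ] at hm; omega
      obtain ⟨e, he⟩ := lidx_surj n (m / 4) h4
      exact ⟨(e, ⟨m % 4, by omega⟩), by simp [lidx, he]; omega⟩

lemma lep_eq : ∀ n (e : DE n), lep n e = (lidx n e : ℝ) / 4 ^ n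
  | 0, _ => by simp [lep, lidx]
  | n + 1, (e, i) => by
      have h := lep_eq n e
      have h4 : (4 : ℝ) ^ n ≠ 0 := by positivity
      simp only [lep, lidx, h, pow_succ, Nat.cast_add, Nat.cast_mul]
      push_cast
      field_simp
lemma log2_4pow (n m : ℕ) (hm : m < 4 ^ n) : Nat.log2 (4 ^ n + m) = 2 * n := by
  rw [Nat.log2_eq_log_two]
  have h4 : (4 : ℕ) ^ n = 2 ^ (2 * n) := by rw [pow_mul]; norm_num
  apply Nat.log_eq_of_pow_le_of_lt_pow
  · omega
  · rw [pow_succ]; omega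

open Classical in
lemma haar_eq (n m : ℕ) (hm : m < 4 ^ n) (t : ℝ) :
    haar (4 ^ n + m) t =
      (if (m : ℝ) / 4 ^ n < t ∧ t ≤ (m : ℝ) / 4 ^ n + 1 / (2 * 4 ^ n) then (1:ℝ) else 0)
      - (if (m : ℝ) / 4 ^ n + 1 / (2 * 4 ^ n) < t ∧ t ≤ ((m : ℝ) + 1) / 4 ^ n then (1:ℝ) else 0) := by
  have hne : 4 ^ n + m ≠ 0 := by positivity
  have hlog : Nat.log2 (4 ^ n + m) = 2 * n := log2_4pow n m hm
  have h4 : (2 : ℝ) ^ (2 * n) = 4 ^ n := by rw [pow_mul]; norm_num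
  have hsub : (4 ^ n + m - 2 ^ (2 * n) : ℕ) = m := by
    have : (4:ℕ) ^ n = 2 ^ (2 * n) := by rw [pow_mul]; norm_num
    omega
  have h4pos : (0:ℝ) < 4 ^ n := by positivity
  rw [haar]
  simp only [hne, hlog, hsub, if_false]
  have e1 : ((m:ℝ)) / 2 ^ (2*n) = (m:ℝ) / 4 ^ n := by rw [h4]
  have e2 : (2 * (m:ℝ) + 1) / 2 ^ (2*n+1) = (m:ℝ) / 4 ^ n + 1 / (2 * 4 ^ n) := by
    rw [pow_succ, h4]; field_simp
  have e3 : ((m:ℝ) + 1) / 2 ^ (2*n) = ((m:ℝ) + 1) / 4 ^ n := by rw [h4]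
  rw [e1, e2, e3]
  by_cases h1 : (m : ℝ) / 4 ^ n < t ∧ t ≤ (m : ℝ) / 4 ^ n + 1 / (2 * 4 ^ n)
  · have h2 : ¬((m : ℝ) / 4 ^ n + 1 / (2 * 4 ^ n) < t ∧ t ≤ ((m : ℝ) + 1) / 4 ^ n) := by
      intro h2; linarith [h1.2, h2.1]
    rw [if_pos h1, if_pos h1, if_neg h2]; norm_num
  · rw [if_neg h1, if_neg h1]
    by_cases h2 : (m : ℝ) / 4 ^ n + 1 / (2 * 4 ^ n) < t ∧ t ≤ ((m : ℝ) + 1) / 4 ^ n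
    · rw [if_pos h2, if_pos h2]; norm_num
    · rw [if_neg h2, if_neg h2]; norm_num
lemma cyc_sum {n : ℕ} (f : DE (n+1) → ℝ) (v : DV (n+1)) :
    ∑ e : DE (n+1), f e * ((if (ends (n+1) e).2 = v then (1:ℝ) else 0) -
      (if (ends (n+1) e).1 = v then (1:ℝ) else 0)) =
    ∑ e : DE n,
      (f (e, 0) * ((if @Eq (DV (n+1)) (Sum.inr (e, 0)) v then (1:ℝ) else 0) - (if @Eq (DV (n+1)) (Sum.inl (ends n e).1) v then 1 else 0))
      + f (e, 1) * ((if @Eq (DV (n+1)) (Sum.inl (ends n e).2) v then (1:ℝ) else 0) - (if @Eq (DV (n+1)) (Sum.inr (e, 0)) v then 1 else 0))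
      + f (e, 2) * ((if @Eq (DV (n+1)) (Sum.inl (ends n e).2) v then (1:ℝ) else 0) - (if @Eq (DV (n+1)) (Sum.inr (e, 1)) v then 1 else 0))
      + f (e, 3) * ((if @Eq (DV (n+1)) (Sum.inr (e, 1)) v then (1:ℝ) else 0) - (if @Eq (DV (n+1)) (Sum.inl (ends n e).1) v then 1 else 0))) := by
  show ∑ p : DE n × Fin 4, f p * ((if (ends (n+1) p).2 = v then (1:ℝ) else 0) -
      (if (ends (n+1) p).1 = v then 1 else 0)) = _
  rw [Fintype.sum_prod_type]
  refine Finset.sum_congr rfl fun e _ => ?_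
  rw [Fin.sum_univ_four, ends_succ0, ends_succ1, ends_succ2, ends_succ3]


lemma mem_cycleSpace_succ {n : ℕ} (f : DE (n+1) → ℝ) :
    f ∈ cycleSpace (n+1) ↔
      (∀ e : DE n, f (e, 0) = f (e, 1) ∧ f (e, 2) = f (e, 3)) ∧
      (fun e => f (e, 0) + f (e, 2)) ∈ cycleSpace n := by
  constructor
  · intro h
    have pairs : ∀ e₀ : DE n, f (e₀, 0) = f (e₀, 1) ∧ f (e₀, 2) = f (e₀, 3) := by
      intro e₀
      constructor
      · have h0 := h (Sum.inr (e₀, 0))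
        erw [cyc_sum (v := Sum.inr (e₀, 0))] at h0
        simp only [Fin.isValue, Sum.inr.injEq, Prod.mk.injEq, and_true, reduceCtorEq, ↓reduceIte,
          sub_zero, mul_ite, mul_one, mul_zero, zero_sub, mul_neg, one_ne_zero, and_false,
          sub_self, add_zero] at h0
        simp only [Finset.sum_add_distrib, Finset.sum_neg_distrib, Finset.sum_ite_eq',
          Finset.mem_univ, if_true] at h0
        linarith
      · have h0 := h (Sum.inr (e₀, 1))
        erw [cyc_sum (v := Sum.inr (e₀, 1))] at h0
        simp only [Fin.isValue, Sum.inr.injEq, Prod.mk.injEq, and_true, reduceCtorEq, ↓reduceIte,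
          sub_zero, mul_ite, mul_one, mul_zero, zero_sub, mul_neg, one_ne_zero, zero_ne_one,
          and_false, sub_self, add_zero, zero_add, and_true] at h0
        simp only [Finset.sum_add_distrib, Finset.sum_neg_distrib, Finset.sum_ite_eq',
          Finset.mem_univ, if_true] at h0
        linarith
    refine ⟨pairs, ?_⟩
    intro v₀
    have h0 := h (Sum.inl v₀)
    erw [cyc_sum (v := Sum.inl v₀)] at h0
    simp only [reduceCtorEq, ↓reduceIte, Sum.inl.injEq, zero_sub, sub_zero, mul_neg] at h0
    refine Eq.trans (Finset.sum_congr rfl fun e _ => ?_) h0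
    beta_reduce
    rw [(pairs e).1, (pairs e).2]
    ring
  · rintro ⟨pairs, hg⟩
    intro v
    obtain v₀ | ⟨e₀, j⟩ := v
    · erw [cyc_sum (v := Sum.inl v₀)]
      have h0 := hg v₀
      simp only [] at h0
      simp only [reduceCtorEq, ↓reduceIte, Sum.inl.injEq, zero_sub, sub_zero, mul_neg]
      refine Eq.trans (Finset.sum_congr rfl fun e _ => ?_) h0
      beta_reduce
      rw [(pairs e).1, (pairs e).2]
      ring
    · erw [cyc_sum (v := Sum.inr (e₀, j))]
      rcases j with ⟨(_|_|jv), hj⟩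
      rotate_right
      · omega
      · rw [show (⟨0, hj⟩ : Fin 2) = 0 from rfl]
        simp only [Fin.isValue, Sum.inr.injEq, Prod.mk.injEq, and_true, reduceCtorEq, ↓reduceIte,
          sub_zero, mul_ite, mul_one, mul_zero, zero_sub, mul_neg, one_ne_zero, and_false,
          sub_self, add_zero]
        simp only [Finset.sum_add_distrib, Finset.sum_neg_distrib, Finset.sum_ite_eq',
          Finset.mem_univ, if_true]
        rw [(pairs e₀).1]; ring
      · rw [show (⟨1, hj⟩ : Fin 2) = 1 from rfl]
        simp only [Fin.isValue, Sum.inr.injEq, Prod.mk.injEq, and_true, reduceCtorEq, ↓reduceIte,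
          sub_zero, mul_ite, mul_one, mul_zero, zero_sub, mul_neg, one_ne_zero, zero_ne_one,
          and_false, sub_self, add_zero, zero_add, and_true]
        simp only [Finset.sum_add_distrib, Finset.sum_neg_distrib, Finset.sum_ite_eq',
          Finset.mem_univ, if_true]
        rw [(pairs e₀).2]; ring
lemma quarters (a t p q N b : ℝ) (hN : 0 < N) (hb : b = 4 * N) :
    p * (b * (if a < t ∧ t ≤ a + 1/b then (1:ℝ) else 0))
      + p * (b * (if a + 1/b < t ∧ t ≤ a + 1/b + 1/b then (1:ℝ) else 0))
      + q * (b * (if a + 2/b < t ∧ t ≤ a + 2/b + 1/b then (1:ℝ) else 0))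
      + q * (b * (if a + 3/b < t ∧ t ≤ a + 3/b + 1/b then (1:ℝ) else 0))
    = 2 * ((p + q) * (N * (if a < t ∧ t ≤ a + 1/N then (1:ℝ) else 0)))
      + 2 * N * (p - q) * ((if a < t ∧ t ≤ a + 1/(2*N) then (1:ℝ) else 0)
          - (if a + 1/(2*N) < t ∧ t ≤ a + 1/N then (1:ℝ) else 0)) := by
  subst hb
  have hN' : N ≠ 0 := ne_of_gt hN
  have f1 : (0:ℝ) < 1/(4*N) := by positivity
  have f2 : (2:ℝ)/(4*N) = 2*(1/(4*N)) := by ring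
  have f3 : (3:ℝ)/(4*N) = 3*(1/(4*N)) := by ring
  have f4 : (1:ℝ)/(2*N) = 2*(1/(4*N)) := by field_simp; ring
  have f5 : (1:ℝ)/N = 4*(1/(4*N)) := by field_simp
  rcases le_or_gt t a with h | h
  ·
    have e0 : (if a < t ∧ t ≤ a + 1/(4*N) then (1:ℝ) else 0) = 0 := if_neg (by rintro ⟨u, v⟩; linarith)
    have e1 : (if a + 1/(4*N) < t ∧ t ≤ a + 1/(4*N) + 1/(4*N) then (1:ℝ) else 0) = 0 := if_neg (by rintro ⟨u, v⟩; linarith)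
    have e2 : (if a + 2/(4*N) < t ∧ t ≤ a + 2/(4*N) + 1/(4*N) then (1:ℝ) else 0) = 0 := if_neg (by rintro ⟨u, v⟩; linarith)
    have e3 : (if a + 3/(4*N) < t ∧ t ≤ a + 3/(4*N) + 1/(4*N) then (1:ℝ) else 0) = 0 := if_neg (by rintro ⟨u, v⟩; linarith)
    have e4 : (if a < t ∧ t ≤ a + 1/N then (1:ℝ) else 0) = 0 := if_neg (by rintro ⟨u, v⟩; linarith)
    have e5 : (if a < t ∧ t ≤ a + 1/(2*N) then (1:ℝ) else 0) = 0 := if_neg (by rintro ⟨u, v⟩; linarith)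
    have e6 : (if a + 1/(2*N) < t ∧ t ≤ a + 1/N then (1:ℝ) else 0) = 0 := if_neg (by rintro ⟨u, v⟩; linarith)
    rw [e0, e1, e2, e3, e4, e5, e6]; ring
  · rcases le_or_gt t (a + 1/(4*N)) with g1 | g1
    ·
      have e0 : (if a < t ∧ t ≤ a + 1/(4*N) then (1:ℝ) else 0) = 1 := if_pos ⟨by linarith, by linarith⟩
      have e1 : (if a + 1/(4*N) < t ∧ t ≤ a + 1/(4*N) + 1/(4*N) then (1:ℝ) else 0) = 0 := if_neg (by rintro ⟨u, v⟩; linarith)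
      have e2 : (if a + 2/(4*N) < t ∧ t ≤ a + 2/(4*N) + 1/(4*N) then (1:ℝ) else 0) = 0 := if_neg (by rintro ⟨u, v⟩; linarith)
      have e3 : (if a + 3/(4*N) < t ∧ t ≤ a + 3/(4*N) + 1/(4*N) then (1:ℝ) else 0) = 0 := if_neg (by rintro ⟨u, v⟩; linarith)
      have e4 : (if a < t ∧ t ≤ a + 1/N then (1:ℝ) else 0) = 1 := if_pos ⟨by linarith, by linarith⟩
      have e5 : (if a < t ∧ t ≤ a + 1/(2*N) then (1:ℝ) else 0) = 1 := if_pos ⟨by linarith, by linarith⟩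
      have e6 : (if a + 1/(2*N) < t ∧ t ≤ a + 1/N then (1:ℝ) else 0) = 0 := if_neg (by rintro ⟨u, v⟩; linarith)
      rw [e0, e1, e2, e3, e4, e5, e6]; ring
    · rcases le_or_gt t (a + 2/(4*N)) with g2 | g2
      ·
        have e0 : (if a < t ∧ t ≤ a + 1/(4*N) then (1:ℝ) else 0) = 0 := if_neg (by rintro ⟨u, v⟩; linarith)
        have e1 : (if a + 1/(4*N) < t ∧ t ≤ a + 1/(4*N) + 1/(4*N) then (1:ℝ) else 0) = 1 := if_pos ⟨by linarith, by linarith⟩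
        have e2 : (if a + 2/(4*N) < t ∧ t ≤ a + 2/(4*N) + 1/(4*N) then (1:ℝ) else 0) = 0 := if_neg (by rintro ⟨u, v⟩; linarith)
        have e3 : (if a + 3/(4*N) < t ∧ t ≤ a + 3/(4*N) + 1/(4*N) then (1:ℝ) else 0) = 0 := if_neg (by rintro ⟨u, v⟩; linarith)
        have e4 : (if a < t ∧ t ≤ a + 1/N then (1:ℝ) else 0) = 1 := if_pos ⟨by linarith, by linarith⟩
        have e5 : (if a < t ∧ t ≤ a + 1/(2*N) then (1:ℝ) else 0) = 1 := if_pos ⟨by linarith, by linarith⟩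
        have e6 : (if a + 1/(2*N) < t ∧ t ≤ a + 1/N then (1:ℝ) else 0) = 0 := if_neg (by rintro ⟨u, v⟩; linarith)
        rw [e0, e1, e2, e3, e4, e5, e6]; ring
      · rcases le_or_gt t (a + 3/(4*N)) with g3 | g3
        ·
          have e0 : (if a < t ∧ t ≤ a + 1/(4*N) then (1:ℝ) else 0) = 0 := if_neg (by rintro ⟨u, v⟩; linarith)
          have e1 : (if a + 1/(4*N) < t ∧ t ≤ a + 1/(4*N) + 1/(4*N) then (1:ℝ) else 0) = 0 := if_neg (by rintro ⟨u, v⟩; linarith)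
          have e2 : (if a + 2/(4*N) < t ∧ t ≤ a + 2/(4*N) + 1/(4*N) then (1:ℝ) else 0) = 1 := if_pos ⟨by linarith, by linarith⟩
          have e3 : (if a + 3/(4*N) < t ∧ t ≤ a + 3/(4*N) + 1/(4*N) then (1:ℝ) else 0) = 0 := if_neg (by rintro ⟨u, v⟩; linarith)
          have e4 : (if a < t ∧ t ≤ a + 1/N then (1:ℝ) else 0) = 1 := if_pos ⟨by linarith, by linarith⟩
          have e5 : (if a < t ∧ t ≤ a + 1/(2*N) then (1:ℝ) else 0) = 0 := if_neg (by rintro ⟨u, v⟩; linarith)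
          have e6 : (if a + 1/(2*N) < t ∧ t ≤ a + 1/N then (1:ℝ) else 0) = 1 := if_pos ⟨by linarith, by linarith⟩
          rw [e0, e1, e2, e3, e4, e5, e6]; ring
        · rcases le_or_gt t (a + 4/(4*N)) with g4 | g4
          · have f6 : (4:ℝ)/(4*N) = 4*(1/(4*N)) := by ring
            have e0 : (if a < t ∧ t ≤ a + 1/(4*N) then (1:ℝ) else 0) = 0 := if_neg (by rintro ⟨u, v⟩; linarith)
            have e1 : (if a + 1/(4*N) < t ∧ t ≤ a + 1/(4*N) + 1/(4*N) then (1:ℝ) else 0) = 0 := if_neg (by rintro ⟨u, v⟩; linarith)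
            have e2 : (if a + 2/(4*N) < t ∧ t ≤ a + 2/(4*N) + 1/(4*N) then (1:ℝ) else 0) = 0 := if_neg (by rintro ⟨u, v⟩; linarith)
            have e3 : (if a + 3/(4*N) < t ∧ t ≤ a + 3/(4*N) + 1/(4*N) then (1:ℝ) else 0) = 1 := if_pos ⟨by linarith, by linarith⟩
            have e4 : (if a < t ∧ t ≤ a + 1/N then (1:ℝ) else 0) = 1 := if_pos ⟨by linarith, by linarith⟩
            have e5 : (if a < t ∧ t ≤ a + 1/(2*N) then (1:ℝ) else 0) = 0 := if_neg (by rintro ⟨u, v⟩; linarith)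
            have e6 : (if a + 1/(2*N) < t ∧ t ≤ a + 1/N then (1:ℝ) else 0) = 1 := if_pos ⟨by linarith, by linarith⟩
            rw [e0, e1, e2, e3, e4, e5, e6]; ring
          · have f6 : (4:ℝ)/(4*N) = 4*(1/(4*N)) := by ring
            have e0 : (if a < t ∧ t ≤ a + 1/(4*N) then (1:ℝ) else 0) = 0 := if_neg (by rintro ⟨u, v⟩; linarith)
            have e1 : (if a + 1/(4*N) < t ∧ t ≤ a + 1/(4*N) + 1/(4*N) then (1:ℝ) else 0) = 0 := if_neg (by rintro ⟨u, v⟩; linarith)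
            have e2 : (if a + 2/(4*N) < t ∧ t ≤ a + 2/(4*N) + 1/(4*N) then (1:ℝ) else 0) = 0 := if_neg (by rintro ⟨u, v⟩; linarith)
            have e3 : (if a + 3/(4*N) < t ∧ t ≤ a + 3/(4*N) + 1/(4*N) then (1:ℝ) else 0) = 0 := if_neg (by rintro ⟨u, v⟩; linarith)
            have e4 : (if a < t ∧ t ≤ a + 1/N then (1:ℝ) else 0) = 0 := if_neg (by rintro ⟨u, v⟩; linarith)
            have e5 : (if a < t ∧ t ≤ a + 1/(2*N) then (1:ℝ) else 0) = 0 := if_neg (by rintro ⟨u, v⟩; linarith)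
            have e6 : (if a + 1/(2*N) < t ∧ t ≤ a + 1/N then (1:ℝ) else 0) = 0 := if_neg (by rintro ⟨u, v⟩; linarith)
            rw [e0, e1, e2, e3, e4, e5, e6]; ring
lemma emb_succ {n : ℕ} (f : DE (n+1) → ℝ) (t : ℝ)
    (pairs : ∀ e : DE n, f (e, 0) = f (e, 1) ∧ f (e, 2) = f (e, 3)) :
    emb (n+1) f t = 2 * emb n (fun e => f (e, 0) + f (e, 2)) t
      + ∑ e : DE n, (2 * 4 ^ n * (f (e, 0) - f (e, 2))) * haar (4 ^ n + lidx n e) t := by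
  have hrhs : (2:ℝ) * emb n (fun e => f (e, 0) + f (e, 2)) t
      = ∑ e : DE n, 2 * ((f (e, 0) + f (e, 2)) *
          (4 ^ n * if lep n e < t ∧ t ≤ lep n e + 1 / 4 ^ n then (1:ℝ) else 0)) := by
    rw [emb, Finset.mul_sum]
  rw [hrhs, ← Finset.sum_add_distrib]
  show ∑ p : DE n × Fin 4, f p * (4 ^ (n+1) *
      if lep (n+1) p < t ∧ t ≤ lep (n+1) p + 1 / 4 ^ (n+1) then (1:ℝ) else 0) = _
  rw [Fintype.sum_prod_type]
  refine Finset.sum_congr rfl fun e _ => ?_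
  rw [Fin.sum_univ_four, haar_eq n (lidx n e) (lidx_lt n e) t]
  have hma : ((lidx n e : ℝ)) / 4 ^ n = lep n e := (lep_eq n e).symm
  have hma2 : ((lidx n e : ℝ) + 1) / 4 ^ n = lep n e + 1 / 4 ^ n := by rw [add_div, hma]
  rw [hma, hma2]
  have h0 : lep (n+1) (e, (0 : Fin 4)) = lep n e := by
    rw [lep_succ]; norm_num
  have h1 : lep (n+1) (e, (1 : Fin 4)) = lep n e + 1 / 4 ^ (n+1) := by
    rw [lep_succ]; norm_num
  have h2 : lep (n+1) (e, (2 : Fin 4)) = lep n e + 2 / 4 ^ (n+1) := by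
    rw [lep_succ]; norm_num
  have h3 : lep (n+1) (e, (3 : Fin 4)) = lep n e + 3 / 4 ^ (n+1) := by
    rw [lep_succ, show ((3 : Fin 4)).val = 3 from rfl]; norm_num
  rw [h0, h1, h2, h3, ← (pairs e).1, ← (pairs e).2]
  have hq := quarters (lep n e) t (f (e, 0)) (f (e, 2)) (4 ^ n) (4 ^ (n+1))
    (by positivity) (by rw [pow_succ]; ring)
  convert hq using 3
noncomputable def embL (n : ℕ) : (DE n → ℝ) →ₗ[ℝ] (ℝ → ℝ) where
  toFun := emb n
  map_add' f g := by
    funext t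
    simp only [emb, Pi.add_apply, add_mul, Finset.sum_add_distrib]
  map_smul' c f := by
    funext t
    simp only [emb, Pi.smul_apply, smul_eq_mul, RingHom.id_apply, Finset.mul_sum]
    exact Finset.sum_congr rfl fun e _ => by ring

lemma cycleSpace_zero : (cycleSpace 0 : Set (DE 0 → ℝ)) = {0} := by
  ext f
  simp only [SetLike.mem_coe, Set.mem_singleton_iff]
  constructor
  · intro h
    have h0 := h (0 : Fin 2)
    erw [show (Finset.univ : Finset (DE 0)) = {()} from rfl, Finset.sum_singleton] at h0
    rw [show ends 0 () = ((0 : Fin 2), (1 : Fin 2)) from rfl] at h0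
    rw [if_neg (by decide : ¬((1 : Fin 2) = 0)), if_pos rfl] at h0
    norm_num at h0
    funext x
    simpa using h0
  · rintro rfl
    exact (cycleSpace 0).zero_mem

lemma biUnion_range_succ (n : ℕ) :
    (⋃ k ∈ Finset.range (n+1), haarLevel (2 * k)) =
      haarLevel (2 * n) ∪ ⋃ k ∈ Finset.range n, haarLevel (2 * k) := by
  ext x
  simp only [Set.mem_iUnion, Set.mem_union, Finset.mem_range, exists_prop]
  constructor
  · rintro ⟨k, hk, hx⟩
    rcases Nat.lt_succ_iff_lt_or_eq.1 hk with h | rfl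
    · exact Or.inr ⟨k, h, hx⟩
    · exact Or.inl hx
  · rintro (hx | ⟨k, hk, hx⟩)
    · exact ⟨n, Nat.lt_succ_self n, hx⟩
    · exact ⟨k, hk.trans (Nat.lt_succ_self n), hx⟩

lemma haar_mem_level (n m : ℕ) (hm : m < 4 ^ n) :
    haar (4 ^ n + m) ∈ haarLevel (2 * n) := by
  refine ⟨4 ^ n + m, ?_, rfl⟩
  have h4 : (4 : ℕ) ^ n = 2 ^ (2 * n) := by rw [pow_mul]; norm_num
  constructor
  · omega
  · rw [pow_succ]; omega

theorem main : ∀ n : ℕ, Submodule.map (embL n) (cycleSpace n) =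
    Submodule.span ℝ (⋃ k ∈ Finset.range n, haarLevel (2 * k)) := by
  intro n
  induction n with
  | zero =>
      have h1 : (⋃ k ∈ Finset.range 0, haarLevel (2 * k)) = (∅ : Set (ℝ → ℝ)) := by
        simp
      rw [h1, Submodule.span_empty]
      ext x
      simp only [Submodule.mem_map, Submodule.mem_bot]
      constructor
      · rintro ⟨f, hf, rfl⟩
        have : f = 0 := by
          have := cycleSpace_zero ▸ (Set.mem_singleton_iff (a := f))
          exact Set.mem_singleton_iff.1 (cycleSpace_zero ▸ (by exact hf : f ∈ (cycleSpace 0 : Set (DE 0 → ℝ))))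
        rw [this]
        exact map_zero (embL 0)
      · rintro rfl
        exact ⟨0, (cycleSpace 0).zero_mem, map_zero (embL 0)⟩
  | succ n ih =>
      have hsplit : Submodule.span ℝ (⋃ k ∈ Finset.range (n+1), haarLevel (2*k))
          = Submodule.span ℝ (haarLevel (2*n)) ⊔
            Submodule.span ℝ (⋃ k ∈ Finset.range n, haarLevel (2*k)) := by
        rw [biUnion_range_succ, Submodule.span_union]
      apply le_antisymm
      · rintro x ⟨f, hf, rfl⟩
        obtain ⟨pairs, hg⟩ := (mem_cycleSpace_succ f).1 hf
        have hx : embL (n+1) f = (2:ℝ) • (embL n (fun e => f (e, 0) + f (e, 2)))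
            + ∑ e : DE n, (2 * 4 ^ n * (f (e, 0) - f (e, 2))) • haar (4 ^ n + lidx n e) := by
          funext t
          have h := emb_succ f t pairs
          simp only [Pi.add_apply, Pi.smul_apply, smul_eq_mul, Finset.sum_apply]
          exact h
        rw [hx]
        refine Submodule.add_mem _ ?_ (Submodule.sum_mem _ fun e _ => ?_)
        · refine Submodule.smul_mem _ _ ?_
          have h1 : embL n (fun e => f (e, 0) + f (e, 2)) ∈
              Submodule.map (embL n) (cycleSpace n) := ⟨_, hg, rfl⟩
          rw [ih] at h1
          rw [hsplit]
          exact Submodule.mem_sup_right h1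
        · refine Submodule.smul_mem _ _ ?_
          rw [hsplit]
          exact Submodule.mem_sup_left
            (Submodule.subset_span (haar_mem_level n (lidx n e) (lidx_lt n e)))
      · rw [hsplit, sup_le_iff]
        constructor
        · rw [Submodule.span_le]
          rintro h ⟨i, hi, rfl⟩
          have h4 : (4:ℕ) ^ n = 2 ^ (2 * n) := by rw [pow_mul]; norm_num
          obtain ⟨hi1, hi2⟩ := hi
          rw [pow_succ] at hi2
          have hmlt : i - 4 ^ n < 4 ^ n := by omega
          obtain ⟨e₀, he₀⟩ := lidx_surj n (i - 4 ^ n) hmlt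
          have him : 4 ^ n + (i - 4 ^ n) = i := by omega
          set c : ℝ := 1 / (4 * 4 ^ n) with hc
          set F : DE (n+1) → ℝ :=
            fun p => if p.1 = e₀ then (if p.2.val ≤ 1 then c else -c) else 0 with hF
          have fv0 : ((0:Fin 4).val) = 0 := rfl
          have fv1 : ((1:Fin 4).val) = 1 := rfl
          have fv2 : ((2:Fin 4).val) = 2 := rfl
          have fv3 : ((3:Fin 4).val) = 3 := rfl
          have pairsF : ∀ e : DE n, F (e, 0) = F (e, 1) ∧ F (e, 2) = F (e, 3) := by
            intro e
            by_cases he : e = e₀ <;> simp [hF, he, fv0, fv1, fv2, fv3]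
          have hgF : (fun e => F (e, 0) + F (e, 2)) = (0 : DE n → ℝ) := by
            funext e
            by_cases he : e = e₀ <;> simp [hF, he, fv0, fv2]
          refine Submodule.mem_map.2 ⟨F, ?_, ?_⟩
          · rw [mem_cycleSpace_succ]
            exact ⟨pairsF, hgF ▸ (cycleSpace n).zero_mem⟩
          · funext t
            have h := emb_succ F t pairsF
            have hdiff : ∀ e : DE n, F (e, 0) - F (e, 2) = if e = e₀ then 2 * c else 0 := by
              intro e
              by_cases he : e = e₀ <;> simp [hF, he, fv0, fv2] <;> ring
            have hemb0 : emb n (fun e => F (e, 0) + F (e, 2)) t = 0 := by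
              rw [hgF]
              simp [emb]
            rw [show (embL (n+1)) F t = emb (n+1) F t from rfl, h, hemb0, mul_zero, zero_add]
            have : ∀ e : DE n, (2 * 4 ^ n * (F (e, 0) - F (e, 2))) * haar (4 ^ n + lidx n e) t
                = if e = e₀ then (2 * 4 ^ n * (2 * c)) * haar (4 ^ n + lidx n e) t else 0 := by
              intro e
              rw [hdiff e]
              by_cases he : e = e₀ <;> simp [he]
            rw [Finset.sum_congr rfl fun e _ => this e, Finset.sum_ite_eq' Finset.univ e₀,
              if_pos (Finset.mem_univ e₀), he₀, him]
            have hcoef : 2 * (4:ℝ) ^ n * (2 * c) = 1 := by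
              rw [hc]
              have : (4:ℝ) ^ n ≠ 0 := by positivity
              field_simp
              ring
            rw [hcoef, one_mul]
        · rw [← ih]
          rintro x ⟨g, hg, rfl⟩
          set F : DE (n+1) → ℝ := fun p => g p.1 / 4 with hF
          have pairsF : ∀ e : DE n, F (e, 0) = F (e, 1) ∧ F (e, 2) = F (e, 3) :=
            fun e => ⟨rfl, rfl⟩
          have hgF : (fun e => F (e, 0) + F (e, 2)) = (2:ℝ)⁻¹ • g := by
            funext e
            simp only [hF, Pi.smul_apply, smul_eq_mul]
            ring
          refine Submodule.mem_map.2 ⟨F, ?_, ?_⟩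
          · rw [mem_cycleSpace_succ]
            exact ⟨pairsF, hgF ▸ Submodule.smul_mem _ _ hg⟩
          · funext t
            have h := emb_succ F t pairsF
            rw [show (embL (n+1)) F t = emb (n+1) F t from rfl, h, hgF]
            have hdz : ∀ e : DE n, F (e, 0) - F (e, 2) = 0 := fun e => by
              simp [hF]
            have hz : ∀ e : DE n, (2 * 4 ^ n * (F (e, 0) - F (e, 2))) *
                haar (4 ^ n + lidx n e) t = 0 := by
              intro e
              rw [hdz e]
              ring
            rw [Finset.sum_congr rfl fun e _ => hz e, Finset.sum_const_zero, add_zero]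
            have : emb n ((2:ℝ)⁻¹ • g) t = (2:ℝ)⁻¹ * emb n g t := by
              have := map_smul (embL n) ((2:ℝ)⁻¹) g
              calc emb n ((2:ℝ)⁻¹ • g) t = (embL n ((2:ℝ)⁻¹ • g)) t := rfl
                _ = ((2:ℝ)⁻¹ • embL n g) t := by rw [map_smul]
                _ = (2:ℝ)⁻¹ * emb n g t := rfl
            rw [this]
            show 2 * (2⁻¹ * embL n g t) = embL n g t
            ring

/-- under the identification `emb n`, the cycle space `Z(D_n)` corresponds
exactly to the span of the even levels of the Haar system. -/
theorem stmt14 (n : ℕ) :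
    emb n '' (cycleSpace n : Set (DE n → ℝ)) =
      (Submodule.span ℝ (⋃ k ∈ Finset.range n, haarLevel (2 * k)) : Set (ℝ → ℝ)) := by
  rw [← main n]
  exact (Submodule.map_coe (embL n) (cycleSpace n)).symm
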